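/- Let N > 0, L > 0, R ≥ 0, set T = 2·√(N/L), and consider the finite-difference differentiator with output y(t) = (u(t) − u(t − T))/T for t ≥ T (and y(t) = 0 for t < T), applied to inputs u = f + η. Then for every τ ≥ T, the worst-case differentiation error sup over f ∈ F_L^R, η ∈ E_N, and times t ≥ τ of |ḟ(t) − y(t)| equals exactly 2·√(N·L). -/

import Mathlib

open Set Filter Topology

/-- `f ∈ F_L`: `f : [0,∞) → ℝ` is differentiable with derivative `f'`
that is Lipschitz continuous with constant `L` on `[0,∞)`. -/
def IsFL (L : ℝ) (f f' : ℝ → ℝ) : Prop :=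
  (∀ t ∈ Set.Ici (0:ℝ), HasDerivWithinAt f (f' t) (Set.Ici 0) t) ∧
  ∀ s ∈ Set.Ici (0:ℝ), ∀ t ∈ Set.Ici (0:ℝ), |f' s - f' t| ≤ L * |s - t|

/-- `η ∈ E_N`: measurable noise bounded by `N` on `[0,∞)`. -/
def IsEN (N : ℝ) (η : ℝ → ℝ) : Prop :=
  Measurable η ∧ ∀ t ∈ Set.Ici (0:ℝ), |η t| ≤ N

/-- `f ∈ F_L^R`: member of `F_L` with `|f(0)| ≤ R` and `|ḟ(0)| ≤ R`. -/
def IsFLR (L R : ℝ) (f f' : ℝ → ℝ) : Prop :=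
  IsFL L f f' ∧ |f 0| ≤ R ∧ |f' 0| ≤ R

open intervalIntegral in
lemma taylor_bound (L T t : ℝ) (hT : 0 < T) (ht : T ≤ t) {f f' : ℝ → ℝ}
    (hf : IsFL L f f') : |f t - f (t - T) - T * f' t| ≤ L * T ^ 2 / 2 := by
  set a := t - T with ha
  have ha0 : (0:ℝ) ≤ a := by simp [ha]; linarith
  have hat : a ≤ t := by simp [ha]; linarith
  have hsub : Icc a t ⊆ Ici (0:ℝ) := fun x hx => le_trans ha0 hx.1
  set g : ℝ → ℝ := fun s => f s - f a - (s - a) * f' t with hg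
  have hgc : ContinuousOn g (Icc a t) := by
    apply ContinuousOn.sub
    · apply ContinuousOn.sub _ continuousOn_const
      intro x hx
      exact ((hf.1 x (hsub hx)).continuousWithinAt).mono hsub
    · fun_prop
  have hg' : ∀ x ∈ Ico a t, HasDerivWithinAt g (f' x - f' t) (Ici x) x := by
    intro x hx
    have h1 : HasDerivWithinAt f (f' x) (Ici x) x :=
      (hf.1 x (le_trans ha0 hx.1)).mono (Ici_subset_Ici.2 (le_trans ha0 hx.1))
    have h2 : HasDerivWithinAt (fun s => (s - a) * f' t) (f' t) (Ici x) x := by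
      simpa using (((hasDerivWithinAt_id x (Ici x)).sub_const a).mul_const (f' t))
    exact (h1.sub_const (f a)).sub h2
  set B : ℝ → ℝ := fun s => L * (t * (s - a) - (s ^ 2 - a ^ 2) / 2) with hB
  have hBd : ∀ x : ℝ, HasDerivAt B (L * (t - x)) x := by
    intro x
    have h1 : HasDerivAt (fun s : ℝ => t * (s - a)) t x := by
      simpa using ((hasDerivAt_id x).sub_const a).const_mul t
    have h2 : HasDerivAt (fun s : ℝ => (s ^ 2 - a ^ 2) / 2) x x := by
      simpa using ((hasDerivAt_pow 2 x).sub_const (a ^ 2)).div_const 2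
    exact (h1.sub h2).const_mul L
  have hbound : ∀ x ∈ Ico a t, ‖f' x - f' t‖ ≤ L * (t - x) := by
    intro x hx
    have := hf.2 x (le_trans ha0 hx.1) t (le_trans ha0 hat)
    calc ‖f' x - f' t‖ = |f' x - f' t| := Real.norm_eq_abs _
      _ ≤ L * |x - t| := this
      _ = L * (t - x) := by rw [abs_sub_comm, abs_of_nonneg (by linarith [hx.2])]
  have hga : ‖g a‖ ≤ B a := by simp [hg, hB]
  have := image_norm_le_of_norm_deriv_right_le_deriv_boundary hgc hg' hga hBd hbound
    (x := t) ⟨hat, le_refl t⟩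
  rw [Real.norm_eq_abs] at this
  calc |f t - f (t - T) - T * f' t| = |g t| := by rw [hg, ha]; ring_nf
    _ ≤ B t := this
    _ = L * T ^ 2 / 2 := by rw [hB, ha]; ring



/-- A differentiator is causal if its output at time `T` depends only on the
input on `[0, T]`. -/
def Causal (D : (ℝ → ℝ) → ℝ → ℝ) : Prop :=
  ∀ u₁ u₂ T, (∀ t ∈ Set.Icc (0:ℝ) T, u₁ t = u₂ t) → D u₁ T = D u₂ T

open intervalIntegral in
theorem stmt2 (L N R : ℝ) (hL : 0 < L) (hN : 0 < N) (hR : 0 ≤ R)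
    (T : ℝ) (hT : T = 2 * Real.sqrt (N / L))
    (y : (ℝ → ℝ) → ℝ → ℝ)
    (hy : ∀ u t, y u t = if T ≤ t then (u t - u (t - T)) / T else 0)
    (τ : ℝ) (hτ : T ≤ τ) :
    sSup { e : ℝ | ∃ (f f' η : ℝ → ℝ) (t : ℝ), IsFLR L R f f' ∧ IsEN N η ∧
        τ ≤ t ∧ e = |f' t - y (f + η) t| } = 2 * Real.sqrt (N * L) := by
  have hsN : 0 < Real.sqrt N := Real.sqrt_pos.2 hN
  have hsL : 0 < Real.sqrt L := Real.sqrt_pos.2 hL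
  have hNL : Real.sqrt (N / L) = Real.sqrt N / Real.sqrt L := Real.sqrt_div hN.le L
  have hT0 : 0 < T := by
    rw [hT, hNL]; positivity
  have hsqN : Real.sqrt N ^ 2 = N := Real.sq_sqrt hN.le
  have hsqL : Real.sqrt L ^ 2 = L := Real.sq_sqrt hL.le
  have hmul : Real.sqrt (N * L) = Real.sqrt N * Real.sqrt L := Real.sqrt_mul hN.le L
  have key : L * T / 2 + 2 * N / T = 2 * Real.sqrt (N * L) := by
    rw [hT, hNL, hmul]
    field_simp
    nlinarith [hsqN, hsqL, hsN, hsL]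
  have hτ0 : 0 ≤ τ := le_trans hT0.le hτ
  apply IsGreatest.csSup_eq
  constructor
  · -- membership: the value is attained
    set t₀ := τ + 2 * T with ht₀
    have ht₀pos : 0 < t₀ := by positivity
    set φ : ℝ → ℝ := fun s => max 0 (min s (t₀ - s)) with hφdef
    have hφlip : ∀ s u : ℝ, |φ s - φ u| ≤ |s - u| := by
      intro s u
      have h1 : |max 0 (min s (t₀ - s)) - max 0 (min u (t₀ - u))| ≤
          |min s (t₀ - s) - min u (t₀ - u)| := by
        rw [max_comm 0 (min s (t₀ - s)), max_comm 0 (min u (t₀ - u))]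
        exact abs_max_sub_max_le_abs _ _ _
      have h2 : |min s (t₀ - s) - min u (t₀ - u)| ≤ max |s - u| |(t₀ - s) - (t₀ - u)| :=
        abs_min_sub_min_le_max _ _ _ _
      have h3 : |(t₀ - s) - (t₀ - u)| = |s - u| := by rw [abs_sub_comm]; ring_nf
      simp only [hφdef]
      calc |max 0 (min s (t₀ - s)) - max 0 (min u (t₀ - u))| ≤ _ := h1
        _ ≤ max |s - u| |(t₀ - s) - (t₀ - u)| := h2
        _ = |s - u| := by rw [h3, max_self]
    have hφcont : Continuous (fun s => L * φ s) := by
      apply Continuous.mul continuous_const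
      exact continuous_const.max (continuous_id.min (continuous_const.sub continuous_id))
    set f : ℝ → ℝ := fun s => ∫ x in (0:ℝ)..s, L * φ x with hfdef
    set g' : ℝ → ℝ := fun s => L * φ s with hg'def
    have hfd : ∀ s : ℝ, HasDerivAt f (g' s) s := fun s =>
      (hφcont.integral_hasStrictDerivAt 0 s).hasDerivAt
    set η : ℝ → ℝ := fun s => if s < t₀ then -N else N with hηdef
    refine ⟨f, g', η, t₀, ⟨⟨fun s _ => (hfd s).hasDerivWithinAt, ?_⟩, ?_, ?_⟩, ⟨?_, ?_⟩,
      by linarith, ?_⟩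
    · intro s _ u _
      have := hφlip s u
      calc |g' s - g' u| = L * |φ s - φ u| := by
            rw [hg'def]; simp only [← mul_sub, abs_mul, abs_of_pos hL]
        _ ≤ L * |s - u| := by nlinarith [abs_nonneg (φ s - φ u)]
    · simpa [hfdef] using hR
    · have hφ0 : φ 0 = 0 := by
        simp only [hφdef, sub_zero]
        rw [min_eq_left ht₀pos.le, max_self]
      simpa [hg'def, hφ0] using hR
    · exact Measurable.ite (measurableSet_lt measurable_id measurable_const)
        measurable_const measurable_const
    · intro s _
      simp only [hηdef]
      split
      · rw [abs_neg, abs_of_pos hN]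
      · rw [abs_of_pos hN]
    · -- the error value
      have hyt : y (f + η) t₀ = ((f + η) t₀ - (f + η) (t₀ - T)) / T := by
        rw [hy]; rw [if_pos (by linarith)]
      have hη1 : η t₀ = N := by simp only [hηdef]; rw [if_neg (lt_irrefl t₀)]
      have hη2 : η (t₀ - T) = -N := by
        simp only [hηdef]; rw [if_pos (by linarith : t₀ - T < t₀)]
      have hfdiff : f t₀ - f (t₀ - T) = L * T ^ 2 / 2 := by
        have hint : IntervalIntegrable (fun x => L * φ x) MeasureTheory.volume 0 (t₀ - T) :=
          hφcont.intervalIntegrable _ _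
        have hint2 : IntervalIntegrable (fun x => L * φ x) MeasureTheory.volume (t₀ - T) t₀ :=
          hφcont.intervalIntegrable _ _
        have hadd := integral_add_adjacent_intervals hint hint2
        have : f t₀ - f (t₀ - T) = ∫ x in (t₀ - T)..t₀, L * φ x := by
          rw [hfdef]; simp only [hg'def, ← hadd]; ring
        rw [this]
        have hEq : EqOn (fun x => L * φ x) (fun x => L * (t₀ - x)) (uIcc (t₀ - T) t₀) := by
          intro x hx
          rw [uIcc_of_le (by linarith)] at hx
          obtain ⟨hx1, hx2⟩ := hx
          have h1 : t₀ - x ≤ x := by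
            have : t₀ ≤ 2 * x := by
              have : τ + T ≤ x := by linarith [hx1]
              linarith
            linarith
          have h2 : 0 ≤ t₀ - x := by linarith
          simp only [hφdef]
          rw [min_eq_right h1, max_eq_right h2]
        rw [integral_congr hEq, integral_const_mul,
          integral_sub intervalIntegrable_const intervalIntegrable_id,
          integral_id, integral_const]
        simp only [smul_eq_mul]
        ring
      have hf't₀ : g' t₀ = 0 := by
        have : φ t₀ = 0 := by
          simp only [hφdef]
          rw [min_eq_right (by linarith), max_eq_left (by linarith)]
        simp [hg'def, this]
      rw [hyt, hf't₀]
      simp only [Pi.add_apply]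
      rw [hη1, hη2]
      have hval : (0:ℝ) - (f t₀ + N - (f (t₀ - T) + -N)) / T =
          -((L * T ^ 2 / 2 + 2 * N) / T) := by
        rw [show f t₀ + N - (f (t₀ - T) + -N) = (f t₀ - f (t₀ - T)) + 2 * N by ring, hfdiff]
        ring
      have hnn : (0:ℝ) ≤ (L * T ^ 2 / 2 + 2 * N) / T :=
        div_nonneg (by nlinarith [sq_nonneg T]) hT0.le
      rw [hval, abs_neg, abs_of_nonneg hnn, ← key]
      field_simp
  · -- upper bound
    rintro e ⟨f, f', η, t, ⟨⟨hfL, hflip⟩, _, _⟩, ⟨hηm, hηb⟩, htτ, he⟩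
    have htT : T ≤ t := le_trans hτ htτ
    have ht0 : 0 ≤ t := le_trans hT0.le htT
    have htT0 : 0 ≤ t - T := by linarith
    rw [hy, if_pos htT] at he
    simp only [Pi.add_apply] at he
    have htay := taylor_bound L T t hT0 htT ⟨hfL, hflip⟩
    have hb1 : |η t| ≤ N := hηb t ht0
    have hb2 : |η (t - T)| ≤ N := hηb (t - T) htT0
    have step : |f' t - (f t + η t - (f (t - T) + η (t - T))) / T| ≤
        L * T / 2 + 2 * N / T := by
      have hrw : f' t - (f t + η t - (f (t - T) + η (t - T))) / T =
          -(f t - f (t - T) - T * f' t) / T + -(η t - η (t - T)) / T := by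
        field_simp
        ring
      rw [hrw]
      calc |(-(f t - f (t - T) - T * f' t)) / T + -(η t - η (t - T)) / T|
          ≤ |(-(f t - f (t - T) - T * f' t)) / T| + |(-(η t - η (t - T))) / T| :=
            abs_add_le _ _
        _ = |f t - f (t - T) - T * f' t| / T + |η t - η (t - T)| / T := by
            rw [abs_div, abs_div, abs_neg, abs_neg, abs_of_pos hT0]
        _ ≤ (L * T ^ 2 / 2) / T + (|η t| + |η (t - T)|) / T := by
            gcongr
            exact abs_sub _ _
        _ ≤ (L * T ^ 2 / 2) / T + (N + N) / T := by gcongr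
        _ = L * T / 2 + 2 * N / T := by field_simp; ring
    rw [he, ← key]
    exact step
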